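/- Define H_k recursively by H₁ = [[0,i],[-i,0]], H_k = [[H_{k-1}, iI],[-iI, -H_{k-1}]]. Suppose H is any 2^k × 2^k Hermitian matrix of the form [[H_{k-1}, S],[S*, -H_{k-1}]] with S diagonal, entries of S in {i,-i}, and H² = k·I. If moreover S₁₁ = i, then S = i·I, i.e., H = H_k. -/

import Mathlib

open Matrix

/-- The equivalence `Fin (2^k) ⊕ Fin (2^k) ≃ Fin (2^(k+1))`. -/
def cubeEquiv (k : ℕ) : Fin (2 ^ k) ⊕ Fin (2 ^ k) ≃ Fin (2 ^ (k + 1)) :=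
  finSumFinEquiv.trans (finCongr (by rw [pow_succ]; omega))

/-- The Hermitian-adjacency matrix `H_k` of the canonical optimum orientation of the
hypercube `Q_k`: `H₀` is the `1×1` zero matrix (so `H₁ = [[0, i], [-i, 0]]`), and
`H_{k+1} = [[H_k, iI], [-iI, -H_k]]`. -/
noncomputable def Hcube : (k : ℕ) → Matrix (Fin (2 ^ k)) (Fin (2 ^ k)) ℂ
  | 0 => 0
  | (k + 1) =>
      Matrix.reindex (cubeEquiv k) (cubeEquiv k)
        (Matrix.fromBlocks (Hcube k) (Complex.I • 1) (-(Complex.I • 1)) (-(Hcube k)))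

/-- Uniqueness step: if `H = [[H_{k-1}, S], [S*, -H_{k-1}]]` with `S` diagonal with
entries in `{i, -i}` satisfies `H² = k·I` (here `k = m+1`), and the first matching
entry is `S₁₁ = i`, then `S = i·I`, i.e. `H = H_k`. -/
lemma Hcube_connected : ∀ (m : ℕ) (f : Fin (2 ^ m) → ℂ),
    (∀ a b, Hcube m a b ≠ 0 → f a = f b) → ∀ a b, f a = f b := by
  intro m
  induction m with
  | zero =>
    intro f _ a b
    have ha : a = b := by
      have h1 := a.isLt
      have h2 := b.isLt
      norm_num at h1 h2
      ext; omega
    rw [ha]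
  | succ k ih =>
    intro f hf a b
    set e := cubeEquiv k with he
    have key : ∀ x y : Fin (2 ^ k) ⊕ Fin (2 ^ k),
        (fromBlocks (Hcube k) (Complex.I • (1 : Matrix (Fin (2^k)) (Fin (2^k)) ℂ))
          (-(Complex.I • 1)) (-(Hcube k))) x y ≠ 0 → f (e x) = f (e y) := by
      intro x y h
      apply hf
      show Hcube (k + 1) (e x) (e y) ≠ 0
      rw [Hcube]
      simpa [Matrix.reindex_apply, Matrix.submatrix_apply, he] using h
    have hinl : ∀ p q : Fin (2 ^ k), f (e (.inl p)) = f (e (.inl q)) := by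
      refine ih (fun x => f (e (.inl x))) ?_
      intro p q h
      exact key (.inl p) (.inl q) (by simpa [Matrix.fromBlocks] using h)
    have hinr : ∀ p q : Fin (2 ^ k), f (e (.inr p)) = f (e (.inr q)) := by
      refine ih (fun x => f (e (.inr x))) ?_
      intro p q h
      refine key (.inr p) (.inr q) ?_
      simpa [Matrix.fromBlocks] using h
    have hcross : ∀ p : Fin (2 ^ k), f (e (.inl p)) = f (e (.inr p)) := by
      intro p
      refine key (.inl p) (.inr p) ?_
      simp [Matrix.fromBlocks, Complex.I_ne_zero]
    have hall : ∀ x y : Fin (2 ^ k) ⊕ Fin (2 ^ k), f (e x) = f (e y) := by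
      rintro (p | p) (q | q)
      · exact hinl p q
      · exact (hinl p q).trans (hcross q)
      · exact (hinr p q).trans (hcross q).symm
      · exact hinr p q
    have := hall (e.symm a) (e.symm b)
    simpa using this

theorem matching_block_forced (m : ℕ)
    (S : Matrix (Fin (2 ^ m)) (Fin (2 ^ m)) ℂ)
    (hS : S.IsDiag) (hSent : ∀ i, S i i = Complex.I ∨ S i i = -Complex.I)
    (hsq : (Matrix.fromBlocks (Hcube m) S Sᴴ (-(Hcube m))) *
        (Matrix.fromBlocks (Hcube m) S Sᴴ (-(Hcube m))) =
      ((m + 1 : ℕ) : ℂ) • (1 : Matrix (Fin (2 ^ m) ⊕ Fin (2 ^ m)) (Fin (2 ^ m) ⊕ Fin (2 ^ m)) ℂ))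
    (h00 : S ⟨0, by positivity⟩ ⟨0, by positivity⟩ = Complex.I) :
    S = Complex.I • (1 : Matrix (Fin (2 ^ m)) (Fin (2 ^ m)) ℂ) := by
  -- S as a diagonal matrix
  have hSd : S = Matrix.diagonal S.diag := (hS.diagonal_diag).symm
  -- extract the off-diagonal block equation
  rw [Matrix.fromBlocks_multiply] at hsq
  have hcomm : Hcube m * S + S * (-(Hcube m)) = 0 := by
    have := congrArg Matrix.toBlocks₁₂ hsq
    simp [Matrix.toBlocks₁₂, Matrix.fromBlocks] at this
    rw [Matrix.mul_neg]
    ext i j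
    exact congrFun (congrFun this i) j
  have hentry : ∀ a b, Hcube m a b ≠ 0 → S.diag a = S.diag b := by
    intro a b hab
    have h1 := congrFun (congrFun hcomm a) b
    rw [Matrix.add_apply, Matrix.mul_apply, Matrix.mul_apply] at h1
    have h2 : Hcube m a b * S.diag b - S.diag a * Hcube m a b = 0 := by
      have e1 : (Hcube m * S) a b = Hcube m a b * S.diag b := by
        conv_lhs => rw [hSd]
        rw [Matrix.mul_diagonal]
      have e2 : (S * (-(Hcube m))) a b = -(S.diag a * Hcube m a b) := by
        conv_lhs => rw [hSd]
        rw [Matrix.diagonal_mul]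
        simp
      have h1' := congrFun (congrFun hcomm a) b
      rw [Matrix.add_apply, e1, e2, Matrix.zero_apply] at h1'
      linear_combination h1'
    have : Hcube m a b * (S.diag b - S.diag a) = 0 := by ring_nf; linear_combination h2
    rcases mul_eq_zero.mp this with h | h
    · exact absurd h hab
    · linear_combination -h
  have hconst := Hcube_connected m S.diag hentry
  have hall : ∀ a, S.diag a = Complex.I := fun a =>
    (hconst a ⟨0, by positivity⟩).trans h00
  rw [hSd]
  ext a b
  by_cases hab : a = b
  · subst hab; simp only [Matrix.diagonal_apply_eq, Matrix.smul_apply, Matrix.one_apply_eq, smul_eq_mul, mul_one]; exact hall a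
  · simp [Matrix.diagonal_apply_ne _ hab, Matrix.one_apply_ne hab]
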